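/- Let y and a be real numbers with −1 < y < 0 and a ≥ 2. Then 0 < 1 − ((y+1)/a)·(1 − y/a) ≤ ((a−1)/a)^(y+1) < 1 − (y+1)/a. -/

import Mathlib

open Real Set

/-- Key pointwise derivative bound: for `0 < t < 1` and `0 < x < 1/2`,
`(1-x)^(t-1) ≤ 1 + 2*(1-t)*x`. -/
lemma aux_deriv_bound {t x : ℝ} (ht0 : 0 < t) (ht1 : t < 1) (hx0 : 0 < x) (hx : x < 1/2) :
    (1 - x) ^ (t - 1) ≤ 1 + 2 * (1 - t) * x := by
  have h1x : 0 < 1 - x := by linarith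
  have hw0 : 0 ≤ x / (1 - x) := by positivity
  have key : (1 + x / (1 - x)) ^ (1 - t) ≤ 1 + (1 - t) * (x / (1 - x)) :=
    rpow_one_add_le_one_add_mul_self (by linarith) (by linarith) (by linarith)
  have heq : (1 - x) ^ (t - 1) = (1 + x / (1 - x)) ^ (1 - t) := by
    have h2 : (1 : ℝ) + x / (1 - x) = (1 - x)⁻¹ := by field_simp; ring
    rw [h2, Real.inv_rpow h1x.le, ← Real.rpow_neg h1x.le]
    congr 1
    ring
  have hfrac : x / (1 - x) ≤ 2 * x := by
    rw [div_le_iff₀ h1x]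
    nlinarith
  calc (1 - x) ^ (t - 1) = (1 + x / (1 - x)) ^ (1 - t) := heq
    _ ≤ 1 + (1 - t) * (x / (1 - x)) := key
    _ ≤ 1 + 2 * (1 - t) * x := by nlinarith

/-- Main lower bound: for `0 < t < 1`, `0 ≤ s ≤ 1/2`,
`1 - t*s - t*(1-t)*s^2 ≤ (1-s)^t`. -/
lemma aux_lower {t s : ℝ} (ht0 : 0 < t) (ht1 : t < 1) (hs0 : 0 ≤ s) (hs : s ≤ 1/2) :
    1 - t * s - t * (1 - t) * s ^ 2 ≤ (1 - s) ^ t := by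
  set F : ℝ → ℝ := fun x => (1 - x) ^ t + (t * x + t * (1 - t) * x ^ 2) with hF
  have hder : ∀ x ∈ Ioo (0 : ℝ) (1/2), HasDerivAt F
      ((-1) * t * (1 - x) ^ (t - 1) + (t + t * (1 - t) * (2 * x))) x := by
    intro x hx
    have h1x : (0:ℝ) < 1 - x := by have := hx.2; simp at this ⊢; linarith
    have h1 : HasDerivAt (fun y : ℝ => 1 - y) (-1) x := by
      simpa using (hasDerivAt_id x).const_sub 1
    have h2 : HasDerivAt (fun y : ℝ => (1 - y) ^ t) ((-1) * t * (1 - x) ^ (t - 1)) x :=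
      h1.rpow_const (Or.inl h1x.ne')
    have h3 : HasDerivAt (fun y : ℝ => t * y + t * (1 - t) * y ^ 2)
        (t + t * (1 - t) * (2 * x)) x := by
      have hp : HasDerivAt (fun y : ℝ => y ^ 2) (2 * x) x := by
        simpa using (hasDerivAt_pow 2 x)
      exact (((hasDerivAt_id' x).const_mul t).add (hp.const_mul (t * (1 - t)))).congr_deriv (by ring)
    exact h2.add h3
  have hmono : MonotoneOn F (Icc (0:ℝ) (1/2)) := by
    apply monotoneOn_of_deriv_nonneg (convex_Icc _ _)
    · apply ContinuousOn.add
      · apply ContinuousOn.rpow_const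
        · exact (continuous_const.sub continuous_id).continuousOn
        · intro x hx
          left
          simp only [mem_Icc] at hx
          have : (0:ℝ) < 1 - x := by linarith [hx.2]
          exact this.ne'
      · fun_prop
    · intro x hx
      rw [interior_Icc] at hx
      exact ((hder x hx).differentiableAt).differentiableWithinAt
    · intro x hx
      rw [interior_Icc] at hx
      rw [(hder x hx).deriv]
      have hb := aux_deriv_bound ht0 ht1 hx.1 hx.2
      have hpow : (0:ℝ) ≤ (1 - x) ^ (t - 1) := Real.rpow_nonneg (by linarith [hx.2]) _
      nlinarith [hx.1.le]
  have h0 : F 0 ≤ F s := hmono (by constructor <;> norm_num)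
    (by constructor <;> assumption) hs0
  have hF0 : F 0 = 1 := by simp [hF]
  have hFs : F s = (1 - s) ^ t + (t * s + t * (1 - t) * s ^ 2) := rfl
  rw [hF0, hFs] at h0
  linarith

theorem stmt_6 (y a : ℝ) (hy1 : -1 < y) (hy2 : y < 0) (ha : 2 ≤ a) :
    0 < 1 - (y + 1) / a * (1 - y / a) ∧
    1 - (y + 1) / a * (1 - y / a) ≤ ((a - 1) / a) ^ (y + 1) ∧
    ((a - 1) / a) ^ (y + 1) < 1 - (y + 1) / a := by
  have ha0 : (0:ℝ) < a := by linarith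
  set t : ℝ := y + 1 with htdef
  set s : ℝ := 1 / a with hsdef
  have hs0 : 0 < s := by positivity
  have hs2 : s ≤ 1/2 := by
    rw [hsdef, div_le_div_iff₀ ha0 (by norm_num)]
    linarith
  have ht0 : 0 < t := by simp [htdef]; linarith
  have ht1 : t < 1 := by simp [htdef]; linarith
  have hbase : (a - 1) / a = 1 - s := by rw [hsdef]; field_simp
  have hya : y / a = (t - 1) * s := by
    field_simp [htdef, hsdef]
    rw [htdef, hsdef]
    linear_combination (-y) * mul_one_div_cancel ha0.ne'
  have hta : (y + 1) / a = t * s := by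
    field_simp [htdef, hsdef]
    rw [htdef, hsdef]
    linear_combination (-(y + 1)) * mul_one_div_cancel ha0.ne'
  have hlhs : 1 - (y + 1) / a * (1 - y / a) = 1 - t * s - t * (1 - t) * s ^ 2 := by
    rw [hta, hya]; ring
  refine ⟨?_, ?_, ?_⟩
  · rw [hlhs]
    nlinarith [sq_nonneg s, sq_nonneg (1 - t), mul_pos ht0 hs0]
  · rw [hlhs, hbase]
    exact aux_lower ht0 ht1 hs0.le hs2
  · rw [hbase, hta]
    have h1 : (1:ℝ) - s = 1 + (-s) := by ring
    have h2 : (1:ℝ) - t * s = 1 + t * (-s) := by ring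
    rw [h1, h2]
    exact rpow_one_add_lt_one_add_mul_self (by linarith) (by linarith) ht0 ht1
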